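/- arXiv:2604.16212 — 6 statements merged into one kernel-verified Lean document; each statement's English description precedes it below -/
import Mathlib

section
/- Let P be symmetric positive definite. The quadratic dissipation inequality x^T(Ā^T P + P Ā)x + 2 x^T P B̄ u ≤ u^T C(Āx + B̄u) − x^T C^T Σ C(Āx + B̄u) holds for all x ∈ ℝ^n and u ∈ ℝ^m if and only if the matrix M̄₁ − (1/2)(M̄₂ + M̄₂^T) is negative semidefinite. (This is the continuous-time LMI characterization of output differential passivity ODP(Σ) with quadratic storage function S(x) = x^T P x, since along trajectories of ẋ = Āx + B̄u, y = Cx one has Ṡ = x^T(Ā^T P + P Ā)x + 2x^T P B̄ u and u^T ẏ − y^T Σ ẏ equals the right-hand side.) -/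
open Matrix

lemma quad_blocks {n m : ℕ} (A : Matrix (Fin n) (Fin n) ℝ) (B : Matrix (Fin n) (Fin m) ℝ)
    (D : Matrix (Fin m) (Fin n) ℝ) (E : Matrix (Fin m) (Fin m) ℝ)
    (x : Fin n → ℝ) (u : Fin m → ℝ) :
    Sum.elim x u ⬝ᵥ (fromBlocks A B D E) *ᵥ Sum.elim x u =
      x ⬝ᵥ A *ᵥ x + x ⬝ᵥ B *ᵥ u + u ⬝ᵥ D *ᵥ x + u ⬝ᵥ E *ᵥ u := by
  rw [fromBlocks_mulVec, sumElim_dotProduct_sumElim, dotProduct_add, dotProduct_add]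
  simp only [Sum.elim_comp_inl, Sum.elim_comp_inr]
  ring

/-- Continuous-time LMI characterization of ODP(Σ) with quadratic storage `S(x) = xᵀ P x`:
the dissipation inequality holds for all `x, u` iff `M̄₁ - (1/2)(M̄₂ + M̄₂ᵀ) ⪯ 0`. -/
theorem ct_odp_lmi_characterization
    {n m : ℕ} (hn : 0 < n) (hm : 0 < m)
    (Abar : Matrix (Fin n) (Fin n) ℝ) (Bbar : Matrix (Fin n) (Fin m) ℝ)
    (C : Matrix (Fin m) (Fin n) ℝ) (Sg : Matrix (Fin m) (Fin m) ℝ)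
    (P : Matrix (Fin n) (Fin n) ℝ)
    (hSg : Sgᵀ = Sg) (hP : P.PosDef) :
    (∀ (x : Fin n → ℝ) (u : Fin m → ℝ),
        x ⬝ᵥ (Abarᵀ * P + P * Abar) *ᵥ x + 2 * (x ⬝ᵥ (P * Bbar) *ᵥ u) ≤
          u ⬝ᵥ C *ᵥ (Abar *ᵥ x + Bbar *ᵥ u)
            - x ⬝ᵥ (Cᵀ * Sg * C) *ᵥ (Abar *ᵥ x + Bbar *ᵥ u)) ↔
      (∀ z : Fin n ⊕ Fin m → ℝ,
        z ⬝ᵥ (fromBlocks (Abarᵀ * P + P * Abar) (P * Bbar) (Bbarᵀ * P) 0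
            - (1 / 2 : ℝ) •
              (fromBlocks (-(Cᵀ * Sg * C * Abar)) (-(Cᵀ * Sg * C * Bbar)) (C * Abar) (C * Bbar)
                + (fromBlocks (-(Cᵀ * Sg * C * Abar)) (-(Cᵀ * Sg * C * Bbar))
                    (C * Abar) (C * Bbar))ᵀ)) *ᵥ z ≤ 0) := by
  have key : ∀ (x : Fin n → ℝ) (u : Fin m → ℝ),
      Sum.elim x u ⬝ᵥ (fromBlocks (Abarᵀ * P + P * Abar) (P * Bbar) (Bbarᵀ * P) 0
            - (1 / 2 : ℝ) •
              (fromBlocks (-(Cᵀ * Sg * C * Abar)) (-(Cᵀ * Sg * C * Bbar)) (C * Abar) (C * Bbar)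
                + (fromBlocks (-(Cᵀ * Sg * C * Abar)) (-(Cᵀ * Sg * C * Bbar))
                    (C * Abar) (C * Bbar))ᵀ)) *ᵥ Sum.elim x u =
      (x ⬝ᵥ (Abarᵀ * P + P * Abar) *ᵥ x + 2 * (x ⬝ᵥ (P * Bbar) *ᵥ u)) -
      (u ⬝ᵥ C *ᵥ (Abar *ᵥ x + Bbar *ᵥ u)
            - x ⬝ᵥ (Cᵀ * Sg * C) *ᵥ (Abar *ᵥ x + Bbar *ᵥ u)) := by
    intro x u
    have hP' : Pᵀ = P := hP.isHermitian
    simp only [sub_mulVec, smul_mulVec, add_mulVec, dotProduct_sub, dotProduct_smul,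
      dotProduct_add, quad_blocks, fromBlocks_transpose, mulVec_add, Matrix.mul_assoc,
      mulVec_mulVec, transpose_neg, transpose_mul, transpose_transpose, hSg, hP',
      neg_mulVec, dotProduct_neg, zero_mulVec, dotProduct_zero, smul_eq_mul]
    have h1 : ∀ (M : Matrix (Fin n) (Fin m) ℝ), x ⬝ᵥ M *ᵥ u = u ⬝ᵥ Mᵀ *ᵥ x := fun M => by
      rw [dotProduct_mulVec, ← mulVec_transpose, dotProduct_comm]
    have h2 : ∀ (M : Matrix (Fin n) (Fin n) ℝ), x ⬝ᵥ M *ᵥ x = x ⬝ᵥ Mᵀ *ᵥ x := fun M => by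
      rw [dotProduct_mulVec, ← mulVec_transpose, dotProduct_comm]
    have h3 : ∀ (M : Matrix (Fin m) (Fin m) ℝ), u ⬝ᵥ M *ᵥ u = u ⬝ᵥ Mᵀ *ᵥ u := fun M => by
      rw [dotProduct_mulVec, ← mulVec_transpose, dotProduct_comm]
    rw [h1 (P * Bbar), h1 (Cᵀ * (Sg * (C * Bbar))), h1 (Abarᵀ * Cᵀ),
      h2 (Abarᵀ * (Cᵀ * (Sg * C))), h3 (Bbarᵀ * Cᵀ)]
    simp only [transpose_mul, transpose_transpose, hSg, hP', Matrix.mul_assoc]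
    ring
  constructor
  · intro h z
    have := key (z ∘ Sum.inl) (z ∘ Sum.inr)
    rw [show Sum.elim (z ∘ Sum.inl) (z ∘ Sum.inr) = z from funext fun i => by cases i <;> rfl] at this
    rw [this]
    linarith [h (z ∘ Sum.inl) (z ∘ Sum.inr)]
  · intro h x u
    have := h (Sum.elim x u)
    rw [key] at this
    linarith
end

section
/- Let P be symmetric positive definite. The discrete-time dissipation inequality (Ax + Bu)^T P (Ax + Bu) − x^T P x ≤ u^T (C(A − I)x + CBu) − (Cx)^T Σ (C(A − I)x + CBu) holds for all x ∈ ℝ^n and u ∈ ℝ^m if and only if the matrix M₁ − (1/2)(M₂ + M₂^T) is negative semidefinite. (This is the discrete-time LMI characterization of ODP(Σ): with storage function S(x_k) = x_k^T P x_k, the inequality states S(x_{k+1}) − S(x_k) ≤ u_k^T Δy_k − y_k^T Σ Δy_k along trajectories of x_{k+1} = Ax_k + Bu_k, y_k = Cx_k, Δy_k := y_{k+1} − y_k.) -/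
open Matrix

/-- Discrete-time LMI characterization of ODP(Σ) with storage `S(x) = xᵀ P x`:
the discrete dissipation inequality holds for all `x, u` iff `M₁ - (1/2)(M₂ + M₂ᵀ) ⪯ 0`. -/
theorem dt_odp_lmi_characterization
    {n m : ℕ} (hn : 0 < n) (hm : 0 < m)
    (A : Matrix (Fin n) (Fin n) ℝ) (B : Matrix (Fin n) (Fin m) ℝ)
    (C : Matrix (Fin m) (Fin n) ℝ) (Sg : Matrix (Fin m) (Fin m) ℝ)
    (P : Matrix (Fin n) (Fin n) ℝ)
    (hSg : Sgᵀ = Sg) (hP : P.PosDef) :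
    (∀ (x : Fin n → ℝ) (u : Fin m → ℝ),
        (A *ᵥ x + B *ᵥ u) ⬝ᵥ P *ᵥ (A *ᵥ x + B *ᵥ u) - x ⬝ᵥ P *ᵥ x ≤
          u ⬝ᵥ ((C * (A - 1)) *ᵥ x + (C * B) *ᵥ u)
            - (C *ᵥ x) ⬝ᵥ Sg *ᵥ ((C * (A - 1)) *ᵥ x + (C * B) *ᵥ u)) ↔
      (∀ z : Fin n ⊕ Fin m → ℝ,
        z ⬝ᵥ (fromBlocks (Aᵀ * P * A - P) (Aᵀ * P * B) (Bᵀ * P * A) (Bᵀ * P * B)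
            - (1 / 2 : ℝ) •
              (fromBlocks (-(Cᵀ * Sg * (C * (A - 1)))) (-(Cᵀ * Sg * (C * B)))
                  (C * (A - 1)) (C * B)
                + (fromBlocks (-(Cᵀ * Sg * (C * (A - 1)))) (-(Cᵀ * Sg * (C * B)))
                    (C * (A - 1)) (C * B))ᵀ)) *ᵥ z ≤ 0) := by
  have hPsym : Pᵀ = P := hP.1
  set M1 := fromBlocks (Aᵀ * P * A - P) (Aᵀ * P * B) (Bᵀ * P * A) (Bᵀ * P * B) with hM1
  set M2 := fromBlocks (-(Cᵀ * Sg * (C * (A - 1)))) (-(Cᵀ * Sg * (C * B)))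
      (C * (A - 1)) (C * B) with hM2
  -- transpose quadratic form
  have htr : ∀ z : Fin n ⊕ Fin m → ℝ, z ⬝ᵥ M2ᵀ *ᵥ z = z ⬝ᵥ M2 *ᵥ z := by
    intro z
    rw [mulVec_transpose, dotProduct_comm, ← dotProduct_mulVec]
  have hquad : ∀ (x : Fin n → ℝ) (u : Fin m → ℝ),
      (Sum.elim x u) ⬝ᵥ (M1 - (1/2 : ℝ) • (M2 + M2ᵀ)) *ᵥ (Sum.elim x u)
        = ((A *ᵥ x + B *ᵥ u) ⬝ᵥ P *ᵥ (A *ᵥ x + B *ᵥ u) - x ⬝ᵥ P *ᵥ x)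
          - (u ⬝ᵥ ((C * (A - 1)) *ᵥ x + (C * B) *ᵥ u)
            - (C *ᵥ x) ⬝ᵥ Sg *ᵥ ((C * (A - 1)) *ᵥ x + (C * B) *ᵥ u)) := by
    intro x u
    have h1 : (Sum.elim x u) ⬝ᵥ (M1 - (1/2 : ℝ) • (M2 + M2ᵀ)) *ᵥ (Sum.elim x u)
        = (Sum.elim x u) ⬝ᵥ M1 *ᵥ (Sum.elim x u)
          - (Sum.elim x u) ⬝ᵥ M2 *ᵥ (Sum.elim x u) := by
      rw [sub_mulVec, dotProduct_sub, smul_mulVec, dotProduct_smul,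
        add_mulVec, dotProduct_add, htr, smul_eq_mul]
      ring
    rw [h1]
    have hM1q : (Sum.elim x u) ⬝ᵥ M1 *ᵥ (Sum.elim x u)
        = (A *ᵥ x + B *ᵥ u) ⬝ᵥ P *ᵥ (A *ᵥ x + B *ᵥ u) - x ⬝ᵥ P *ᵥ x := by
      rw [hM1, fromBlocks_mulVec, sumElim_dotProduct_sumElim]
      have hs : ∀ (v w : Fin n → ℝ), v ⬝ᵥ P *ᵥ w = w ⬝ᵥ P *ᵥ v := by
        intro v w
        rw [dotProduct_mulVec, ← mulVec_transpose, hPsym, dotProduct_comm]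
      have ht : ∀ {a b : ℕ} (M : Matrix (Fin b) (Fin a) ℝ) (v : Fin a → ℝ)
          (w : Fin b → ℝ), v ⬝ᵥ Mᵀ *ᵥ w = (M *ᵥ v) ⬝ᵥ w := by
        intro a b M v w
        rw [dotProduct_mulVec, vecMul_transpose]
      simp only [Sum.elim_comp_inl, Sum.elim_comp_inr, sub_mulVec, add_mulVec,
        dotProduct_add, dotProduct_sub, ← mulVec_mulVec, ht, mulVec_add,
        add_dotProduct]
      rw [hs (A *ᵥ x) (B *ᵥ u)]
      ring
    have hM2q : (Sum.elim x u) ⬝ᵥ M2 *ᵥ (Sum.elim x u)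
        = u ⬝ᵥ ((C * (A - 1)) *ᵥ x + (C * B) *ᵥ u)
          - (C *ᵥ x) ⬝ᵥ Sg *ᵥ ((C * (A - 1)) *ᵥ x + (C * B) *ᵥ u) := by
      rw [hM2, fromBlocks_mulVec, sumElim_dotProduct_sumElim]
      have ht : ∀ {a b : ℕ} (M : Matrix (Fin b) (Fin a) ℝ) (v : Fin a → ℝ)
          (w : Fin b → ℝ), v ⬝ᵥ Mᵀ *ᵥ w = (M *ᵥ v) ⬝ᵥ w := by
        intro a b M v w
        rw [dotProduct_mulVec, vecMul_transpose]
      simp only [Sum.elim_comp_inl, Sum.elim_comp_inr, neg_mulVec, dotProduct_neg,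
        dotProduct_add, mulVec_add, ← mulVec_mulVec, ht]
      ring
    rw [hM1q, hM2q]
  constructor
  · intro h z
    have hz : Sum.elim (z ∘ Sum.inl) (z ∘ Sum.inr) = z := by
      funext i; cases i <;> rfl
    have := hquad (z ∘ Sum.inl) (z ∘ Sum.inr)
    rw [hz] at this
    rw [this]
    linarith [h (z ∘ Sum.inl) (z ∘ Sum.inr)]
  · intro h x u
    have := h (Sum.elim x u)
    rw [hquad x u] at this
    linarith
end

section
/- Suppose X₊ = AX + BU and that the data-driven LMI X₊^T P X₊ − X^T P X − (1/2)(M₃ + M₃^T) ⪯ 0 holds, where M₃ := (U − Σ C X)^T (C X₊ − C X). Then D^T (M₁ − (1/2)(M₂ + M₂^T)) D ⪯ 0, where D := [X; U] ∈ ℝ^{(n+m)×N} is the matrix obtained by stacking X on top of U. -/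
open Matrix

lemma quad_aux {n m N : ℕ} (X : Matrix (Fin n) (Fin N) ℝ) (U : Matrix (Fin m) (Fin N) ℝ)
    (E : Matrix (Fin n) (Fin n) ℝ) (F : Matrix (Fin n) (Fin m) ℝ)
    (G : Matrix (Fin m) (Fin n) ℝ) (H : Matrix (Fin m) (Fin m) ℝ) :
    (fromRows X U)ᵀ * fromBlocks E F G H * fromRows X U
      = Xᵀ * E * X + Xᵀ * F * U + (Uᵀ * G * X + Uᵀ * H * U) := by
  rw [transpose_fromRows, Matrix.mul_assoc, fromBlocks_mul_fromRows,
    fromCols_mul_fromRows]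
  simp [Matrix.mul_add, Matrix.mul_assoc]

/-- If `X₊ = AX + BU` and the data-driven LMI
`X₊ᵀ P X₊ − Xᵀ P X − (1/2)(M₃ + M₃ᵀ) ⪯ 0` holds, then
`Dᵀ (M₁ − (1/2)(M₂ + M₂ᵀ)) D ⪯ 0` where `D = [X; U]`. -/
theorem data_lmi_implies_compressed_lmi
    {n m N : ℕ} (hn : 0 < n) (hm : 0 < m) (hN : 0 < N)
    (A : Matrix (Fin n) (Fin n) ℝ) (B : Matrix (Fin n) (Fin m) ℝ)
    (C : Matrix (Fin m) (Fin n) ℝ) (Sg : Matrix (Fin m) (Fin m) ℝ)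
    (P : Matrix (Fin n) (Fin n) ℝ) (hSg : Sgᵀ = Sg) (hP : Pᵀ = P)
    (X Xp : Matrix (Fin n) (Fin N) ℝ) (U : Matrix (Fin m) (Fin N) ℝ)
    (hdata : Xp = A * X + B * U)
    (hLMI : ∀ z : Fin N → ℝ,
      z ⬝ᵥ (Xpᵀ * P * Xp - Xᵀ * P * X
        - (1 / 2 : ℝ) • ((U - Sg * C * X)ᵀ * (C * Xp - C * X)
            + ((U - Sg * C * X)ᵀ * (C * Xp - C * X))ᵀ)) *ᵥ z ≤ 0) :
    ∀ z : Fin N → ℝ,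
      z ⬝ᵥ ((fromRows X U)ᵀ *
        (fromBlocks (Aᵀ * P * A - P) (Aᵀ * P * B) (Bᵀ * P * A) (Bᵀ * P * B)
          - (1 / 2 : ℝ) •
            (fromBlocks (-(Cᵀ * Sg * (C * (A - 1)))) (-(Cᵀ * Sg * (C * B)))
                (C * (A - 1)) (C * B)
              + (fromBlocks (-(Cᵀ * Sg * (C * (A - 1)))) (-(Cᵀ * Sg * (C * B)))
                  (C * (A - 1)) (C * B))ᵀ)) *
        fromRows X U) *ᵥ z ≤ 0 := by
  intro z
  set D := fromRows X U with hD
  set M₂ := fromBlocks (-(Cᵀ * Sg * (C * (A - 1)))) (-(Cᵀ * Sg * (C * B)))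
      (C * (A - 1)) (C * B) with hM2
  have h1 : Dᵀ * fromBlocks (Aᵀ * P * A - P) (Aᵀ * P * B) (Bᵀ * P * A) (Bᵀ * P * B) * D
      = Xpᵀ * P * Xp - Xᵀ * P * X := by
    rw [quad_aux, hdata]
    simp only [transpose_add, transpose_mul, Matrix.add_mul, Matrix.mul_add,
      Matrix.sub_mul, Matrix.mul_sub, Matrix.mul_assoc]
    abel
  have h2 : Dᵀ * M₂ * D = (U - Sg * C * X)ᵀ * (C * Xp - C * X) := by
    rw [hM2, quad_aux, hdata]
    simp only [transpose_sub, transpose_mul, hSg, Matrix.add_mul, Matrix.mul_add,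
      Matrix.sub_mul, Matrix.mul_sub, Matrix.mul_assoc, Matrix.mul_one,
      Matrix.neg_mul, Matrix.mul_neg]
    abel
  have h3 : Dᵀ * M₂ᵀ * D = ((U - Sg * C * X)ᵀ * (C * Xp - C * X))ᵀ := by
    have := congrArg transpose h2
    rw [transpose_mul, transpose_mul, transpose_transpose] at this
    rw [Matrix.mul_assoc]; exact this
  have key : Dᵀ * (fromBlocks (Aᵀ * P * A - P) (Aᵀ * P * B) (Bᵀ * P * A) (Bᵀ * P * B)
        - (1 / 2 : ℝ) • (M₂ + M₂ᵀ)) * D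
      = Xpᵀ * P * Xp - Xᵀ * P * X
        - (1 / 2 : ℝ) • ((U - Sg * C * X)ᵀ * (C * Xp - C * X)
            + ((U - Sg * C * X)ᵀ * (C * Xp - C * X))ᵀ) := by
    rw [Matrix.mul_sub, Matrix.sub_mul, Matrix.mul_smul, Matrix.smul_mul,
      Matrix.mul_add, Matrix.add_mul, h1, h2, h3]
  rw [key]
  exact hLMI z
end

section
/- Suppose the measured data satisfies X₊ = AX + BU, the rank condition rank([X; U]) = n + m holds, and P is symmetric positive definite with X₊^T P X₊ − X^T P X − (1/2)(M₃ + M₃^T) ⪯ 0, where M₃ := (U − Σ C X)^T (C X₊ − C X). Then the discrete-time dissipation inequality (Ax + Bu)^T P (Ax + Bu) − x^T P x ≤ u^T (C(A − I)x + CBu) − (Cx)^T Σ (C(A − I)x + CBu) holds for all x ∈ ℝ^n and u ∈ ℝ^m; that is, the system x_{k+1} = Ax_k + Bu_k, y_k = Cx_k is ODP(Σ) with storage function S(x) = x^T P x. -/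
open Matrix

lemma quad_form_aux {a b N : ℕ} (E : Matrix (Fin a) (Fin N) ℝ)
    (F : Matrix (Fin a) (Fin b) ℝ) (G : Matrix (Fin b) (Fin N) ℝ) (z : Fin N → ℝ) :
    z ⬝ᵥ (Eᵀ * F * G) *ᵥ z = (E *ᵥ z) ⬝ᵥ F *ᵥ (G *ᵥ z) := by
  rw [← mulVec_mulVec, ← mulVec_mulVec, dotProduct_mulVec, vecMul_transpose]

/-- Data-driven ODP certification: if `X₊ = AX + BU`, the rank condition
`rank [X; U] = n + m` holds, `P ≻ 0`, and the data-driven LMI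
`X₊ᵀ P X₊ − Xᵀ P X − (1/2)(M₃ + M₃ᵀ) ⪯ 0` holds, then the discrete-time
dissipation inequality holds for all `x, u`; i.e. the system is ODP(Σ)
with storage `S(x) = xᵀ P x`. -/
theorem data_driven_odp_certification
    {n m N : ℕ} (hn : 0 < n) (hm : 0 < m) (hN : 0 < N)
    (A : Matrix (Fin n) (Fin n) ℝ) (B : Matrix (Fin n) (Fin m) ℝ)
    (C : Matrix (Fin m) (Fin n) ℝ) (Sg : Matrix (Fin m) (Fin m) ℝ)
    (P : Matrix (Fin n) (Fin n) ℝ)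
    (hSg : Sgᵀ = Sg) (hP : P.PosDef)
    (X Xp : Matrix (Fin n) (Fin N) ℝ) (U : Matrix (Fin m) (Fin N) ℝ)
    (hdata : Xp = A * X + B * U)
    (hrank : (fromRows X U).rank = n + m)
    (hLMI : ∀ z : Fin N → ℝ,
      z ⬝ᵥ (Xpᵀ * P * Xp - Xᵀ * P * X
        - (1 / 2 : ℝ) • ((U - Sg * C * X)ᵀ * (C * Xp - C * X)
            + ((U - Sg * C * X)ᵀ * (C * Xp - C * X))ᵀ)) *ᵥ z ≤ 0) :
    ∀ (x : Fin n → ℝ) (u : Fin m → ℝ),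
      (A *ᵥ x + B *ᵥ u) ⬝ᵥ P *ᵥ (A *ᵥ x + B *ᵥ u) - x ⬝ᵥ P *ᵥ x ≤
        u ⬝ᵥ ((C * (A - 1)) *ᵥ x + (C * B) *ᵥ u)
          - (C *ᵥ x) ⬝ᵥ Sg *ᵥ ((C * (A - 1)) *ᵥ x + (C * B) *ᵥ u) := by
  intro x u
  -- surjectivity of z ↦ (X z, U z)
  have hsurj : Function.Surjective (fromRows X U).mulVecLin := by
    rw [← LinearMap.range_eq_top]
    apply Submodule.eq_top_of_finrank_eq
    rw [show Module.finrank ℝ (LinearMap.range (fromRows X U).mulVecLin)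
        = (fromRows X U).rank from rfl, hrank,
      Module.finrank_fintype_fun_eq_card, Fintype.card_sum, Fintype.card_fin,
      Fintype.card_fin]
  obtain ⟨z, hz⟩ := hsurj (Sum.elim x u)
  rw [Matrix.mulVecLin_apply, fromRows_mulVec] at hz
  have hX : X *ᵥ z = x := funext fun i => congrFun hz (Sum.inl i)
  have hU : U *ᵥ z = u := funext fun i => congrFun hz (Sum.inr i)
  have h := hLMI z
  have hXp : Xp *ᵥ z = A *ᵥ x + B *ᵥ u := by
    rw [hdata, add_mulVec, ← mulVec_mulVec, ← mulVec_mulVec, hX, hU]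
  -- expand the quadratic form
  have e1 : z ⬝ᵥ (Xpᵀ * P * Xp) *ᵥ z = (A *ᵥ x + B *ᵥ u) ⬝ᵥ P *ᵥ (A *ᵥ x + B *ᵥ u) := by
    rw [quad_form_aux, hXp]
  have e2 : z ⬝ᵥ (Xᵀ * P * X) *ᵥ z = x ⬝ᵥ P *ᵥ x := by
    rw [quad_form_aux, hX]
  set M3 := (U - Sg * C * X)ᵀ * (C * Xp - C * X) with hM3
  have e3 : z ⬝ᵥ M3 *ᵥ z
      = (u - Sg *ᵥ (C *ᵥ x)) ⬝ᵥ ((C * Xp - C * X) *ᵥ z) := by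
    conv_lhs => rw [hM3, ← mulVec_mulVec, dotProduct_mulVec, vecMul_transpose, sub_mulVec,
      ← mulVec_mulVec, ← mulVec_mulVec, hX, hU]
  have e4 : (C * Xp - C * X) *ᵥ z = (C * (A - 1)) *ᵥ x + (C * B) *ᵥ u := by
    simp only [sub_mulVec, ← mulVec_mulVec, hXp, hX, one_mulVec, mulVec_sub, mulVec_add]
    abel
  have e3T : z ⬝ᵥ M3ᵀ *ᵥ z = z ⬝ᵥ M3 *ᵥ z := by
    rw [dotProduct_mulVec, vecMul_transpose, dotProduct_comm, dotProduct_mulVec]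
  have expand : z ⬝ᵥ (Xpᵀ * P * Xp - Xᵀ * P * X - (1 / 2 : ℝ) • (M3 + M3ᵀ)) *ᵥ z
      = z ⬝ᵥ (Xpᵀ * P * Xp) *ᵥ z - z ⬝ᵥ (Xᵀ * P * X) *ᵥ z
        - (1 / 2 : ℝ) * (z ⬝ᵥ M3 *ᵥ z + z ⬝ᵥ M3ᵀ *ᵥ z) := by
    simp only [sub_mulVec, add_mulVec, smul_mulVec, dotProduct_sub,
      dotProduct_add, dotProduct_smul, smul_eq_mul]
  rw [expand, e1, e2, e3T] at h
  have key : z ⬝ᵥ M3 *ᵥ z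
      = u ⬝ᵥ ((C * (A - 1)) *ᵥ x + (C * B) *ᵥ u)
        - (C *ᵥ x) ⬝ᵥ Sg *ᵥ ((C * (A - 1)) *ᵥ x + (C * B) *ᵥ u) := by
    rw [e3, e4, sub_dotProduct]
    congr 1
    nth_rewrite 1 [← hSg]
    rw [mulVec_transpose, ← dotProduct_mulVec, dotProduct_mulVec]
  have : (1 / 2 : ℝ) * (z ⬝ᵥ M3 *ᵥ z + z ⬝ᵥ M3 *ᵥ z) = z ⬝ᵥ M3 *ᵥ z := by ring
  rw [this] at h
  linarith [h, key.symm ▸ h]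
end

section
/- Define A(h) := exp(h Ā) and B(h) := ∫₀^h exp(Ā(h − τ)) B̄ dτ, with M₁(h) := [[A(h)^T P A(h) − P, A(h)^T P B(h)],[B(h)^T P A(h), B(h)^T P B(h)]] and M₂(h) := [[−C^T Σ C(A(h) − I), −C^T Σ C B(h)],[C(A(h) − I), C B(h)]]. Then (1/h)(M₁(h) − (1/2)(M₂(h) + M₂(h)^T)) converges to M̄₁ − (1/2)(M̄₂ + M̄₂^T) as h → 0⁺. Consequently, if there exists h₀ > 0 such that M₁(h) − (1/2)(M₂(h) + M₂(h)^T) is negative semidefinite for all h ∈ (0, h₀], then M̄₁ − (1/2)(M̄₂ + M̄₂^T) is negative semidefinite. -/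
open Matrix Filter
open scoped Matrix.Norms.L2Operator Topology

/-- `A(h) = exp(h Ā)`. -/
noncomputable def Ad {n : ℕ} (Abar : Matrix (Fin n) (Fin n) ℝ) (h : ℝ) :
    Matrix (Fin n) (Fin n) ℝ :=
  NormedSpace.exp (h • Abar)

/-- `B(h) = ∫₀^h exp(Ā(h−τ)) B̄ dτ`. -/
noncomputable def Bd {n m : ℕ} (Abar : Matrix (Fin n) (Fin n) ℝ)
    (Bbar : Matrix (Fin n) (Fin m) ℝ) (h : ℝ) : Matrix (Fin n) (Fin m) ℝ :=
  ∫ τ in (0 : ℝ)..h, NormedSpace.exp ((h - τ) • Abar) * Bbar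

/-- The sampled block matrix `M₁(h)`. -/
noncomputable def M1d {n m : ℕ} (Abar : Matrix (Fin n) (Fin n) ℝ)
    (Bbar : Matrix (Fin n) (Fin m) ℝ) (P : Matrix (Fin n) (Fin n) ℝ) (h : ℝ) :
    Matrix (Fin n ⊕ Fin m) (Fin n ⊕ Fin m) ℝ :=
  fromBlocks ((Ad Abar h)ᵀ * P * Ad Abar h - P) ((Ad Abar h)ᵀ * P * Bd Abar Bbar h)
    ((Bd Abar Bbar h)ᵀ * P * Ad Abar h) ((Bd Abar Bbar h)ᵀ * P * Bd Abar Bbar h)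

/-- The sampled block matrix `M₂(h)`. -/
noncomputable def M2d {n m : ℕ} (Abar : Matrix (Fin n) (Fin n) ℝ)
    (Bbar : Matrix (Fin n) (Fin m) ℝ) (C : Matrix (Fin m) (Fin n) ℝ)
    (Sg : Matrix (Fin m) (Fin m) ℝ) (h : ℝ) :
    Matrix (Fin n ⊕ Fin m) (Fin n ⊕ Fin m) ℝ :=
  fromBlocks (-(Cᵀ * Sg * (C * (Ad Abar h - 1)))) (-(Cᵀ * Sg * (C * Bd Abar Bbar h)))
    (C * (Ad Abar h - 1)) (C * Bd Abar Bbar h)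


set_option maxHeartbeats 1600000

section Helpers

lemma hasDerivAt_Ad' {n : ℕ} (Abar : Matrix (Fin n) (Fin n) ℝ) :
    HasDerivAt (fun h : ℝ => Ad Abar h) Abar 0 := by
  have := hasDerivAt_exp_smul_const (𝕂 := ℝ) Abar (0:ℝ)
  simpa [Ad] using this

lemma Ad_zero' {n : ℕ} (Abar : Matrix (Fin n) (Fin n) ℝ) : Ad Abar 0 = 1 := by
  simp [Ad]

lemma hasDerivAt_Bd' {n m : ℕ} (Abar : Matrix (Fin n) (Fin n) ℝ)
    (Bbar : Matrix (Fin n) (Fin m) ℝ) :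
    HasDerivAt (fun h : ℝ => Bd Abar Bbar h) Bbar 0 := by
  have hg : Continuous (fun s : ℝ => NormedSpace.exp (s • Abar) * Bbar) :=
    ((show Continuous (NormedSpace.exp : Matrix (Fin n) (Fin n) ℝ → _) from
      continuous_iff_continuousAt.2 fun x =>
        (NormedSpace.exp_analytic (𝕂 := ℝ) x).continuousAt).comp (continuous_id.smul continuous_const)).matrix_mul
      continuous_const
  have hBd : ∀ h : ℝ, Bd Abar Bbar h = ∫ s in (0:ℝ)..h, NormedSpace.exp (s • Abar) * Bbar := by
    intro h
    rw [Bd, intervalIntegral.integral_comp_sub_left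
      (fun s => NormedSpace.exp (s • Abar) * Bbar) h]
    simp
  have hd : HasDerivAt (fun h : ℝ => ∫ s in (0:ℝ)..h, NormedSpace.exp (s • Abar) * Bbar)
      (NormedSpace.exp ((0:ℝ) • Abar) * Bbar) 0 :=
    intervalIntegral.integral_hasDerivAt_right (hg.intervalIntegrable _ _)
      (hg.stronglyMeasurableAtFilter _ _) hg.continuousAt
  have : HasDerivAt (fun h : ℝ => Bd Abar Bbar h) (NormedSpace.exp ((0:ℝ) • Abar) * Bbar) 0 := by
    simpa only [hBd] using hd
  simpa using this

lemma Bd_zero' {n m : ℕ} (Abar : Matrix (Fin n) (Fin n) ℝ)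
    (Bbar : Matrix (Fin n) (Fin m) ℝ) : Bd Abar Bbar 0 = 0 := by
  simp [Bd]

lemma tendsto_E' {n : ℕ} (Abar : Matrix (Fin n) (Fin n) ℝ) :
    Tendsto (fun h : ℝ => h⁻¹ • (Ad Abar h - 1)) (𝓝[>] 0) (𝓝 Abar) := by
  have := (hasDerivAt_iff_tendsto_slope).1 (hasDerivAt_Ad' Abar)
  have h2 : Tendsto (slope (fun h : ℝ => Ad Abar h) 0) (𝓝[>] 0) (𝓝 Abar) :=
    this.mono_left (nhdsWithin_mono _ (fun x hx => ne_of_gt hx))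
  refine h2.congr fun h => ?_
  simp [slope, Ad_zero', vsub_eq_sub]

lemma tendsto_F' {n m : ℕ} (Abar : Matrix (Fin n) (Fin n) ℝ)
    (Bbar : Matrix (Fin n) (Fin m) ℝ) :
    Tendsto (fun h : ℝ => h⁻¹ • Bd Abar Bbar h) (𝓝[>] 0) (𝓝 Bbar) := by
  have := (hasDerivAt_iff_tendsto_slope).1 (hasDerivAt_Bd' Abar Bbar)
  have h2 : Tendsto (slope (fun h : ℝ => Bd Abar Bbar h) 0) (𝓝[>] 0) (𝓝 Bbar) :=
    this.mono_left (nhdsWithin_mono _ (fun x hx => ne_of_gt hx))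
  refine h2.congr fun h => ?_
  simp [slope, Bd_zero', vsub_eq_sub]

lemma tendsto_G' {n : ℕ} (Abar : Matrix (Fin n) (Fin n) ℝ) :
    Tendsto (fun h : ℝ => Ad Abar h) (𝓝[>] 0) (𝓝 1) := by
  have := (hasDerivAt_Ad' Abar).continuousAt.tendsto
  rw [Ad_zero'] at this
  exact this.mono_left nhdsWithin_le_nhds

variable {α : Type*} {l : Filter α} {ia ib ic id' : Type*} [Fintype ia] [Fintype ib]
  [Fintype ic] [Fintype id'] [DecidableEq ia] [DecidableEq ib] [DecidableEq ic] [DecidableEq id']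

lemma Filter.Tendsto.mmul {f : α → Matrix ia ib ℝ} {g : α → Matrix ib ic ℝ}
    {A : Matrix ia ib ℝ} {B : Matrix ib ic ℝ}
    (hf : Tendsto f l (𝓝 A)) (hg : Tendsto g l (𝓝 B)) :
    Tendsto (fun x => f x * g x) l (𝓝 (A * B)) := by
  have hc : Continuous (fun p : Matrix ia ib ℝ × Matrix ib ic ℝ =>
      p.1 * p.2) := continuous_fst.matrix_mul continuous_snd
  exact (hc.tendsto (A, B)).comp (hf.prodMk_nhds hg)

lemma Filter.Tendsto.mtrans {f : α → Matrix ia ib ℝ} {A : Matrix ia ib ℝ}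
    (hf : Tendsto f l (𝓝 A)) : Tendsto (fun x => (f x)ᵀ) l (𝓝 Aᵀ) :=
  ((continuous_id.matrix_transpose).tendsto A).comp hf

lemma Filter.Tendsto.mfromBlocks
    {f1 : α → Matrix ia ia ℝ} {f2 : α → Matrix ia ib ℝ}
    {f3 : α → Matrix ib ia ℝ} {f4 : α → Matrix ib ib ℝ}
    {A1 : Matrix ia ia ℝ} {A2 : Matrix ia ib ℝ}
    {A3 : Matrix ib ia ℝ} {A4 : Matrix ib ib ℝ}
    (h1 : Tendsto f1 l (𝓝 A1)) (h2 : Tendsto f2 l (𝓝 A2))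
    (h3 : Tendsto f3 l (𝓝 A3)) (h4 : Tendsto f4 l (𝓝 A4)) :
    Tendsto (fun x => Matrix.fromBlocks (f1 x) (f2 x) (f3 x) (f4 x)) l
      (𝓝 (Matrix.fromBlocks A1 A2 A3 A4)) := by
  have hc : Continuous (fun p : (Matrix ia ia ℝ × Matrix ia ib ℝ) ×
      (Matrix ib ia ℝ × Matrix ib ib ℝ) =>
      Matrix.fromBlocks p.1.1 p.1.2 p.2.1 p.2.2) :=
    Continuous.matrix_fromBlocks (continuous_fst.comp continuous_fst)
      (continuous_snd.comp continuous_fst) (continuous_fst.comp continuous_snd)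
      (continuous_snd.comp continuous_snd)
  exact (hc.tendsto ((A1, A2), (A3, A4))).comp ((h1.prodMk_nhds h2).prodMk_nhds
    (h3.prodMk_nhds h4))

lemma Filter.Tendsto.mquad {f : α → Matrix ia ia ℝ} {A : Matrix ia ia ℝ}
    (hf : Tendsto f l (𝓝 A)) (z : ia → ℝ) :
    Tendsto (fun x => z ⬝ᵥ (f x) *ᵥ z) l (𝓝 (z ⬝ᵥ A *ᵥ z)) := by
  have hc : Continuous (fun M : Matrix ia ia ℝ => z ⬝ᵥ M *ᵥ z) :=
    continuous_const.dotProduct (continuous_id.matrix_mulVec continuous_const)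
  exact (hc.tendsto A).comp hf

lemma key_alg {n m : ℕ} (h : ℝ) (E G P : Matrix (Fin n) (Fin n) ℝ)
    (F : Matrix (Fin n) (Fin m) ℝ) (C : Matrix (Fin m) (Fin n) ℝ)
    (Sg : Matrix (Fin m) (Fin m) ℝ) (hG : G - 1 = h • E) :
    fromBlocks (Gᵀ*P*G - P) (Gᵀ*P*(h•F)) ((h•F)ᵀ*P*G) ((h•F)ᵀ*P*(h•F))
      - (1/2:ℝ) • (fromBlocks (-(Cᵀ*Sg*(C*(G-1)))) (-(Cᵀ*Sg*(C*(h•F)))) (C*(G-1)) (C*(h•F))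
        + (fromBlocks (-(Cᵀ*Sg*(C*(G-1)))) (-(Cᵀ*Sg*(C*(h•F)))) (C*(G-1)) (C*(h•F)))ᵀ)
    = h • (fromBlocks (Gᵀ*P*E + Eᵀ*P) (Gᵀ*P*F) (Fᵀ*P*G) ((h•F)ᵀ*P*F)
      - (1/2:ℝ) • (fromBlocks (-(Cᵀ*Sg*(C*E))) (-(Cᵀ*Sg*(C*F))) (C*E) (C*F)
        + (fromBlocks (-(Cᵀ*Sg*(C*E))) (-(Cᵀ*Sg*(C*F))) (C*E) (C*F))ᵀ)) := by
  have e1 : Gᵀ*P*G - P = Gᵀ*P*(h•E) + (h•E)ᵀ*P := by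
    rw [← hG]
    simp only [Matrix.transpose_sub, Matrix.transpose_one]
    noncomm_ring
  rw [hG, e1]
  simp only [Matrix.fromBlocks_transpose, Matrix.fromBlocks_add, Matrix.fromBlocks_smul,
    Matrix.fromBlocks_neg, sub_eq_add_neg]
  rw [Matrix.fromBlocks_inj]
  refine ⟨?_, ?_, ?_, ?_⟩ <;>
  · simp only [Matrix.mul_smul, Matrix.smul_mul, Matrix.transpose_smul, smul_neg, smul_add,
      Matrix.transpose_neg]
    module

end Helpers

/-- `(1/h)(M₁(h) − (1/2)(M₂(h) + M₂(h)ᵀ))` converges to `M̄₁ − (1/2)(M̄₂ + M̄₂ᵀ)`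
as `h → 0⁺`; consequently, if the discrete-time matrix is negative semidefinite
for all small `h > 0`, then the continuous-time matrix is negative semidefinite. -/
theorem sampled_lmi_limit_and_necessity
    {n m : ℕ} (hn : 0 < n) (hm : 0 < m)
    (Abar : Matrix (Fin n) (Fin n) ℝ) (Bbar : Matrix (Fin n) (Fin m) ℝ)
    (C : Matrix (Fin m) (Fin n) ℝ) (Sg : Matrix (Fin m) (Fin m) ℝ)
    (P : Matrix (Fin n) (Fin n) ℝ) (hSg : Sgᵀ = Sg) (hP : Pᵀ = P) :
    Tendsto
      (fun h : ℝ => (1 / h) •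
        (M1d Abar Bbar P h
          - (1 / 2 : ℝ) • (M2d Abar Bbar C Sg h + (M2d Abar Bbar C Sg h)ᵀ)))
      (𝓝[>] (0 : ℝ))
      (𝓝 (fromBlocks (Abarᵀ * P + P * Abar) (P * Bbar) (Bbarᵀ * P) 0
        - (1 / 2 : ℝ) •
          (fromBlocks (-(Cᵀ * Sg * C * Abar)) (-(Cᵀ * Sg * C * Bbar)) (C * Abar) (C * Bbar)
            + (fromBlocks (-(Cᵀ * Sg * C * Abar)) (-(Cᵀ * Sg * C * Bbar))
                (C * Abar) (C * Bbar))ᵀ))) ∧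
    ((∃ h₀ > (0 : ℝ), ∀ h ∈ Set.Ioc (0 : ℝ) h₀, ∀ z : Fin n ⊕ Fin m → ℝ,
        z ⬝ᵥ (M1d Abar Bbar P h
          - (1 / 2 : ℝ) • (M2d Abar Bbar C Sg h + (M2d Abar Bbar C Sg h)ᵀ)) *ᵥ z ≤ 0) →
      ∀ z : Fin n ⊕ Fin m → ℝ,
        z ⬝ᵥ (fromBlocks (Abarᵀ * P + P * Abar) (P * Bbar) (Bbarᵀ * P) 0
          - (1 / 2 : ℝ) •
            (fromBlocks (-(Cᵀ * Sg * C * Abar)) (-(Cᵀ * Sg * C * Bbar)) (C * Abar) (C * Bbar)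
              + (fromBlocks (-(Cᵀ * Sg * C * Abar)) (-(Cᵀ * Sg * C * Bbar))
                  (C * Abar) (C * Bbar))ᵀ)) *ᵥ z ≤ 0) := by
  classical
  set E : ℝ → Matrix (Fin n) (Fin n) ℝ := fun h => h⁻¹ • (Ad Abar h - 1) with hEdef
  set F : ℝ → Matrix (Fin n) (Fin m) ℝ := fun h => h⁻¹ • Bd Abar Bbar h with hFdef
  set Nf : ℝ → Matrix (Fin n ⊕ Fin m) (Fin n ⊕ Fin m) ℝ := fun h =>
    fromBlocks (-(Cᵀ*Sg*(C*E h))) (-(Cᵀ*Sg*(C*F h))) (C*E h) (C*F h) with hNdef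
  set Psi : ℝ → Matrix (Fin n ⊕ Fin m) (Fin n ⊕ Fin m) ℝ := fun h =>
    fromBlocks ((Ad Abar h)ᵀ*P*(E h) + (E h)ᵀ*P) ((Ad Abar h)ᵀ*P*(F h))
      ((F h)ᵀ*P*(Ad Abar h)) ((h • F h)ᵀ*P*(F h))
      - (1/2:ℝ) • (Nf h + (Nf h)ᵀ) with hPsidef
  have hE : Tendsto E (𝓝[>] 0) (𝓝 Abar) := tendsto_E' Abar
  have hF : Tendsto F (𝓝[>] 0) (𝓝 Bbar) := tendsto_F' Abar Bbar
  have hG : Tendsto (fun h : ℝ => Ad Abar h) (𝓝[>] 0) (𝓝 1) := tendsto_G' Abar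
  have hid : Tendsto (fun h : ℝ => h) (𝓝[>] (0:ℝ)) (𝓝 0) := tendsto_id.mono_left
    nhdsWithin_le_nhds
  have hNlim : Tendsto Nf (𝓝[>] 0) (𝓝 (fromBlocks (-(Cᵀ*Sg*(C*Abar))) (-(Cᵀ*Sg*(C*Bbar)))
      (C*Abar) (C*Bbar))) := by
    refine Filter.Tendsto.mfromBlocks ?_ ?_ ?_ ?_
    · exact (tendsto_const_nhds.mmul (tendsto_const_nhds.mmul hE)).neg
    · exact (tendsto_const_nhds.mmul (tendsto_const_nhds.mmul hF)).neg
    · exact tendsto_const_nhds.mmul hE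
    · exact tendsto_const_nhds.mmul hF
  have hPsiLim : Tendsto Psi (𝓝[>] 0)
      (𝓝 (fromBlocks ((1:Matrix (Fin n) (Fin n) ℝ)ᵀ*P*Abar + Abarᵀ*P)
        ((1:Matrix (Fin n) (Fin n) ℝ)ᵀ*P*Bbar) (Bbarᵀ*P*(1:Matrix (Fin n) (Fin n) ℝ))
        (((0:ℝ) • Bbar)ᵀ*P*Bbar)
        - (1/2:ℝ) • (fromBlocks (-(Cᵀ*Sg*(C*Abar))) (-(Cᵀ*Sg*(C*Bbar))) (C*Abar) (C*Bbar)
          + (fromBlocks (-(Cᵀ*Sg*(C*Abar))) (-(Cᵀ*Sg*(C*Bbar))) (C*Abar) (C*Bbar))ᵀ))) := by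
    refine Filter.Tendsto.sub ?_ ((hNlim.add hNlim.mtrans).const_smul _)
    refine Filter.Tendsto.mfromBlocks ?_ ?_ ?_ ?_
    · exact ((hG.mtrans.mmul tendsto_const_nhds).mmul hE).add
        (hE.mtrans.mmul tendsto_const_nhds)
    · exact (hG.mtrans.mmul tendsto_const_nhds).mmul hF
    · exact (hF.mtrans.mmul tendsto_const_nhds).mmul hG
    · exact ((hid.smul hF).mtrans.mmul tendsto_const_nhds).mmul hF
  have hLeq : (fromBlocks ((1:Matrix (Fin n) (Fin n) ℝ)ᵀ*P*Abar + Abarᵀ*P)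
        ((1:Matrix (Fin n) (Fin n) ℝ)ᵀ*P*Bbar) (Bbarᵀ*P*(1:Matrix (Fin n) (Fin n) ℝ))
        (((0:ℝ) • Bbar)ᵀ*P*Bbar)
        - (1/2:ℝ) • (fromBlocks (-(Cᵀ*Sg*(C*Abar))) (-(Cᵀ*Sg*(C*Bbar))) (C*Abar) (C*Bbar)
          + (fromBlocks (-(Cᵀ*Sg*(C*Abar))) (-(Cᵀ*Sg*(C*Bbar))) (C*Abar) (C*Bbar))ᵀ))
      = (fromBlocks (Abarᵀ * P + P * Abar) (P * Bbar) (Bbarᵀ * P) 0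
        - (1 / 2 : ℝ) •
          (fromBlocks (-(Cᵀ * Sg * C * Abar)) (-(Cᵀ * Sg * C * Bbar)) (C * Abar) (C * Bbar)
            + (fromBlocks (-(Cᵀ * Sg * C * Abar)) (-(Cᵀ * Sg * C * Bbar))
                (C * Abar) (C * Bbar))ᵀ)) := by
    have h1 : (fromBlocks (-(Cᵀ*Sg*(C*Abar))) (-(Cᵀ*Sg*(C*Bbar))) (C*Abar) (C*Bbar) :
        Matrix (Fin n ⊕ Fin m) (Fin n ⊕ Fin m) ℝ)
        = fromBlocks (-(Cᵀ * Sg * C * Abar)) (-(Cᵀ * Sg * C * Bbar)) (C * Abar) (C * Bbar) := by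
      rw [Matrix.fromBlocks_inj]
      exact ⟨by simp only [Matrix.mul_assoc], by simp only [Matrix.mul_assoc], rfl, rfl⟩
    rw [h1]
    congr 1
    rw [Matrix.fromBlocks_inj]
    refine ⟨?_, ?_, ?_, ?_⟩
    · rw [Matrix.transpose_one, Matrix.one_mul, add_comm]
    · rw [Matrix.transpose_one, Matrix.one_mul]
    · rw [Matrix.mul_one]
    · rw [zero_smul, Matrix.transpose_zero, Matrix.zero_mul, Matrix.zero_mul]
  rw [hLeq] at hPsiLim
  have hEq : ∀ h ∈ Set.Ioi (0:ℝ),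
      (1 / h) • (M1d Abar Bbar P h
        - (1 / 2 : ℝ) • (M2d Abar Bbar C Sg h + (M2d Abar Bbar C Sg h)ᵀ)) = Psi h := by
    intro h hh
    have hne : h ≠ 0 := ne_of_gt hh
    have hGE : Ad Abar h - 1 = h • E h := by
      rw [hEdef]; simp only; rw [smul_inv_smul₀ hne]
    have hBF : Bd Abar Bbar h = h • F h := by
      rw [hFdef]; simp only; rw [smul_inv_smul₀ hne]
    have hM1 : M1d Abar Bbar P h = fromBlocks ((Ad Abar h)ᵀ*P*(Ad Abar h) - P)
        ((Ad Abar h)ᵀ*P*(h • F h)) ((h • F h)ᵀ*P*(Ad Abar h)) ((h • F h)ᵀ*P*(h • F h)) := by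
      rw [M1d, hBF]
    have hM2 : M2d Abar Bbar C Sg h = fromBlocks (-(Cᵀ*Sg*(C*(Ad Abar h - 1))))
        (-(Cᵀ*Sg*(C*(h • F h)))) (C*(Ad Abar h - 1)) (C*(h • F h)) := by
      rw [M2d, hBF]
    rw [hM1, hM2, key_alg h (E h) (Ad Abar h) P (F h) C Sg hGE, one_div,
      inv_smul_smul₀ hne]
  have hTend : Tendsto
      (fun h : ℝ => (1 / h) • (M1d Abar Bbar P h
        - (1 / 2 : ℝ) • (M2d Abar Bbar C Sg h + (M2d Abar Bbar C Sg h)ᵀ)))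
      (𝓝[>] (0 : ℝ))
      (𝓝 (fromBlocks (Abarᵀ * P + P * Abar) (P * Bbar) (Bbarᵀ * P) 0
        - (1 / 2 : ℝ) •
          (fromBlocks (-(Cᵀ * Sg * C * Abar)) (-(Cᵀ * Sg * C * Bbar)) (C * Abar) (C * Bbar)
            + (fromBlocks (-(Cᵀ * Sg * C * Abar)) (-(Cᵀ * Sg * C * Bbar))
                (C * Abar) (C * Bbar))ᵀ))) := by
    refine Tendsto.congr' ?_ hPsiLim
    filter_upwards [self_mem_nhdsWithin] with h hh
    exact (hEq h hh).symm
  refine ⟨hTend, ?_⟩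
  rintro ⟨h₀, h₀pos, hle⟩ z
  have hq := hTend.mquad z
  have hev : ∀ᶠ h in 𝓝[>] (0:ℝ),
      z ⬝ᵥ ((1 / h) • (M1d Abar Bbar P h
        - (1 / 2 : ℝ) • (M2d Abar Bbar C Sg h + (M2d Abar Bbar C Sg h)ᵀ))) *ᵥ z ≤ 0 := by
    filter_upwards [Ioc_mem_nhdsGT_of_mem (Set.mem_Ico.2 ⟨le_refl (0:ℝ), h₀pos⟩)] with h hh
    have hpos : (0:ℝ) < h := hh.1
    have hq0 := hle h hh z
    have : z ⬝ᵥ ((1 / h) • (M1d Abar Bbar P h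
        - (1 / 2 : ℝ) • (M2d Abar Bbar C Sg h + (M2d Abar Bbar C Sg h)ᵀ))) *ᵥ z
        = (1 / h) * (z ⬝ᵥ (M1d Abar Bbar P h
        - (1 / 2 : ℝ) • (M2d Abar Bbar C Sg h + (M2d Abar Bbar C Sg h)ᵀ)) *ᵥ z) := by
      rw [Matrix.smul_mulVec, dotProduct_smul, smul_eq_mul]
    rw [this]
    exact mul_nonpos_of_nonneg_of_nonpos (by positivity) hq0
  exact le_of_tendsto hq hev
end

section
/- Suppose X₊ = AX + BU, where the data matrices X, X₊ ∈ ℝ^{n×N} and U ∈ ℝ^{m×N} are generated by a state trajectory, i.e., there exist vectors x₀, …, x_N ∈ ℝ^n and u₀, …, u_{N−1} ∈ ℝ^m with x_{k+1} = A x_k + B u_k for k = 0, …, N−1, X = [x₀ ⋯ x_{N−1}], X₊ = [x₁ ⋯ x_N], U = [u₀ ⋯ u_{N−1}]. If P is symmetric and the discrete-time LMI M₁ − (1/2)(M₂ + M₂^T) ⪯ 0 holds, then the data-driven LMI X₊^T P X₊ − X^T P X − (1/2)(M₃ + M₃^T) ⪯ 0 holds, where M₃ := (U − Σ C X)^T (C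 X₊ − C X). (That is, every trajectory of a system satisfying the model-based LMI produces data satisfying the data-driven LMI, so the data-driven criterion is necessary as well.) -/
open Matrix

/-- Necessity of the data-driven LMI: if the data matrices come from a trajectory of
`x_{k+1} = A x_k + B u_k` (so `X₊ = AX + BU`), `P` is symmetric, and the model-based
LMI `M₁ − (1/2)(M₂ + M₂ᵀ) ⪯ 0` holds, then the data-driven LMI
`X₊ᵀ P X₊ − Xᵀ P X − (1/2)(M₃ + M₃ᵀ) ⪯ 0` holds. -/
theorem model_lmi_implies_data_lmi
    {n m N : ℕ} (hn : 0 < n) (hm : 0 < m) (hN : 0 < N)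
    (A : Matrix (Fin n) (Fin n) ℝ) (B : Matrix (Fin n) (Fin m) ℝ)
    (C : Matrix (Fin m) (Fin n) ℝ) (Sg : Matrix (Fin m) (Fin m) ℝ)
    (P : Matrix (Fin n) (Fin n) ℝ) (hSg : Sgᵀ = Sg) (hP : Pᵀ = P)
    (X Xp : Matrix (Fin n) (Fin N) ℝ) (U : Matrix (Fin m) (Fin N) ℝ)
    (x : Fin (N + 1) → Fin n → ℝ) (u : Fin N → Fin m → ℝ)
    (hrec : ∀ k : Fin N, x k.succ = A *ᵥ x k.castSucc + B *ᵥ u k)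
    (hX : ∀ (i : Fin n) (j : Fin N), X i j = x j.castSucc i)
    (hXp : ∀ (i : Fin n) (j : Fin N), Xp i j = x j.succ i)
    (hU : ∀ (i : Fin m) (j : Fin N), U i j = u j i)
    (hdata : Xp = A * X + B * U)
    (hLMI : ∀ z : Fin n ⊕ Fin m → ℝ,
      z ⬝ᵥ (fromBlocks (Aᵀ * P * A - P) (Aᵀ * P * B) (Bᵀ * P * A) (Bᵀ * P * B)
        - (1 / 2 : ℝ) •
          (fromBlocks (-(Cᵀ * Sg * (C * (A - 1)))) (-(Cᵀ * Sg * (C * B)))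
              (C * (A - 1)) (C * B)
            + (fromBlocks (-(Cᵀ * Sg * (C * (A - 1)))) (-(Cᵀ * Sg * (C * B)))
                (C * (A - 1)) (C * B))ᵀ)) *ᵥ z ≤ 0) :
    ∀ z : Fin N → ℝ,
      z ⬝ᵥ (Xpᵀ * P * Xp - Xᵀ * P * X
        - (1 / 2 : ℝ) • ((U - Sg * C * X)ᵀ * (C * Xp - C * X)
            + ((U - Sg * C * X)ᵀ * (C * Xp - C * X))ᵀ)) *ᵥ z ≤ 0 := by
  intro z
  have h := hLMI (Sum.elim (X *ᵥ z) (U *ᵥ z))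
  have hx : Xp *ᵥ z = A *ᵥ (X *ᵥ z) + B *ᵥ (U *ᵥ z) := by
    rw [hdata, add_mulVec, mulVec_mulVec, mulVec_mulVec]
  have hsg : ∀ (v w : Fin m → ℝ), (Sg *ᵥ v) ⬝ᵥ w = v ⬝ᵥ (Sg *ᵥ w) := by
    intro v w
    rw [dotProduct_mulVec, ← vecMul_transpose, hSg]
  have tdot : ∀ {p q : ℕ} (Y : Matrix (Fin p) (Fin q) ℝ) (v : Fin q → ℝ) (w : Fin p → ℝ),
      v ⬝ᵥ Yᵀ *ᵥ w = (Y *ᵥ v) ⬝ᵥ w := by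
    intro p q Y v w
    rw [dotProduct_mulVec, vecMul_transpose]
  have htr : ∀ (M : Matrix (Fin N) (Fin N) ℝ), z ⬝ᵥ Mᵀ *ᵥ z = z ⬝ᵥ M *ᵥ z := by
    intro M; rw [dotProduct_mulVec, vecMul_transpose, dotProduct_comm]
  have htr2 : ∀ (M : Matrix (Fin n ⊕ Fin m) (Fin n ⊕ Fin m) ℝ) (w : Fin n ⊕ Fin m → ℝ),
      w ⬝ᵥ Mᵀ *ᵥ w = w ⬝ᵥ M *ᵥ w := by
    intro M w; rw [dotProduct_mulVec, vecMul_transpose, dotProduct_comm]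
  simp only [sub_mulVec, add_mulVec, smul_mulVec, dotProduct_sub, dotProduct_add,
    dotProduct_smul, htr, htr2, fromBlocks_mulVec, Sum.elim_comp_inl, Sum.elim_comp_inr,
    sumElim_dotProduct_sumElim] at h ⊢
  simp only [← mulVec_mulVec, tdot, hx, sub_mulVec, add_mulVec, one_mulVec, mulVec_add, mulVec_sub, neg_mulVec,
    dotProduct_add, dotProduct_sub, add_dotProduct, sub_dotProduct, dotProduct_neg,
    neg_dotProduct, hsg, smul_eq_mul] at h ⊢
  linarith [h]
end
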